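/- For a Cartesian product of edges and even cycles, the Helly number is at most 3: any finite family of pairwise intersecting convex subsets of the product has a common vertex; in particular h(K_2) = 2 and h(C) = 3 for an even cycle C of length at least 6. -/

import Mathlib

variable {α : Type*}

/-- `W` is (geodesically) convex in `G`. -/
def GConvex (G : SimpleGraph α) (W : Set α) : Prop :=
  ∀ u ∈ W, ∀ v ∈ W, ∀ w, G.dist u w + G.dist w v = G.dist u v → w ∈ W

/-- `H` is gated in `G`: every vertex has a gate in `H`. -/
def Gated (G : SimpleGraph α) (H : Set α) : Prop :=
  ∀ x, ∃ g ∈ H, ∀ y ∈ H, G.dist x y = G.dist x g + G.dist g y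

/-- Adjacency of a cycle on `ZMod n` (for `n = 2` this is `K₂`). -/
def cycleAdj (n : ℕ) (x y : ZMod n) : Prop := x ≠ y ∧ (y = x + 1 ∨ x = y + 1)

/-- The cycle graph on `ZMod n`. -/
def cycGraph (n : ℕ) : SimpleGraph (ZMod n) where
  Adj x y := cycleAdj n x y
  symm := by
    constructor
    rintro x y ⟨h1, h2⟩
    exact ⟨Ne.symm h1, h2.symm⟩
  loopless := by
    constructor
    rintro x ⟨h1, _⟩
    exact h1 rfl

/-- The Cartesian product of the cycles/edges `ZMod (F i)`. -/
def edgeCycleProd {m : ℕ} (F : Fin m → ℕ) : SimpleGraph (∀ i, ZMod (F i)) where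
  Adj x y := ∃ i, cycleAdj (F i) (x i) (y i) ∧ ∀ j, j ≠ i → x j = y j
  symm := by
    constructor
    rintro x y ⟨i, ⟨h1, h2⟩, h3⟩
    exact ⟨i, ⟨Ne.symm h1, h2.symm⟩, fun j hj => (h3 j hj).symm⟩
  loopless := by
    constructor
    rintro x ⟨i, ⟨h1, _⟩, _⟩
    exact h1 rfl


open SimpleGraph

set_option linter.unusedSectionVars false
set_option maxHeartbeats 1000000

def cdist (n : ℕ) (c : ZMod n) : ℕ := min c.val (n - c.val)

section cyc
variable {n : ℕ} [NeZero n]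

lemma cdist_zero : cdist n 0 = 0 := by simp [cdist, ZMod.val_zero]

lemma cdist_neg (c : ZMod n) : cdist n (-c) = cdist n c := by
  unfold cdist
  rcases eq_or_ne c 0 with rfl | h
  · simp
  · have h1 : (-c).val = n - c.val := by rw [ZMod.neg_val]; simp [h]
    have h2 : c.val < n := ZMod.val_lt c
    have h3 : 0 < c.val := by
      rcases Nat.eq_zero_or_pos c.val with h0 | h0
      · exact absurd ((ZMod.val_eq_zero c).mp h0) h
      · exact h0
    omega

lemma cdist_add_one_le (c : ZMod n) : cdist n (c + 1) ≤ cdist n c + 1 := by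
  rcases eq_or_lt_of_le (NeZero.one_le (n := n)) with h1 | h1
  · have hc : cdist n (c+1) ≤ n := by unfold cdist; have := ZMod.val_lt (c+1); omega
    omega
  · haveI : Fact (1 < n) := ⟨h1⟩
    have hv1 : (1 : ZMod n).val = 1 := ZMod.val_one n
    have hadd : (c + 1).val = (c.val + 1) % n := by rw [ZMod.val_add, hv1]
    have hlt : c.val < n := ZMod.val_lt c
    rcases eq_or_lt_of_le (Nat.succ_le_of_lt hlt) with he | he
    · have h0 : (c+1).val = 0 := by
        rw [hadd, (by omega : c.val + 1 = n), Nat.mod_self]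
      unfold cdist; omega
    · have h0 : (c+1).val = c.val + 1 := by rw [hadd, Nat.mod_eq_of_lt he]
      unfold cdist; omega

lemma cdist_sub_one_le (c : ZMod n) : cdist n (c - 1) ≤ cdist n c + 1 := by
  rw [← cdist_neg (c - 1), ← cdist_neg c]
  have h : -(c - 1) = -c + 1 := by ring
  rw [h]
  exact cdist_add_one_le (-c)

lemma cdist_step {a b z : ZMod n} (h : cycleAdj n a b) :
    cdist n (z - a) ≤ cdist n (z - b) + 1 := by
  rcases h.2 with h2 | h2
  · have he : z - a = (z - b) + 1 := by rw [h2]; ring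
    rw [he]; exact cdist_add_one_le _
  · have he : z - a = (z - b) - 1 := by rw [h2]; ring
    rw [he]; exact cdist_sub_one_le _

lemma cdist_le_walk {x y : ZMod n} (w : (cycGraph n).Walk x y) :
    cdist n (y - x) ≤ w.length := by
  induction w with
  | nil => simp [cdist_zero]
  | @cons u v z h p ih =>
    rw [SimpleGraph.Walk.length_cons]
    have h' : cycleAdj n u v := h
    calc cdist n (z - u) ≤ cdist n (z - v) + 1 := cdist_step h'
    _ ≤ p.length + 1 := by omega

lemma zmod_one_ne_zero (hn : 2 ≤ n) : (1 : ZMod n) ≠ 0 := by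
  haveI : Fact (1 < n) := ⟨hn⟩
  exact one_ne_zero

lemma cyc_adj_right (hn : 2 ≤ n) (x : ZMod n) : cycleAdj n x (x + 1) := by
  refine ⟨fun h => ?_, Or.inl rfl⟩
  have h1 : (1 : ZMod n) = 0 := by linear_combination -h
  exact zmod_one_ne_zero hn h1

lemma cyc_adj_left (hn : 2 ≤ n) (x : ZMod n) : cycleAdj n x (x - 1) := by
  refine ⟨fun h => ?_, Or.inr (by ring)⟩
  have h1 : (1 : ZMod n) = 0 := by linear_combination h
  exact zmod_one_ne_zero hn h1

lemma exists_cyc_walk (hn : 2 ≤ n) (x c : ZMod n) :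
    ∃ w : (cycGraph n).Walk x (x + c), w.length = cdist n c := by
  generalize hk : cdist n c = k
  induction k using Nat.strong_induction_on generalizing x c with
  | _ k ih =>
  rcases eq_or_ne c 0 with rfl | hc
  · refine ⟨SimpleGraph.Walk.nil.copy rfl (by ring), ?_⟩
    simp [← hk, cdist_zero]
  · have hvlt : c.val < n := ZMod.val_lt c
    have hvpos : 0 < c.val := by
      rcases Nat.eq_zero_or_pos c.val with h0 | h0
      · exact absurd ((ZMod.val_eq_zero c).mp h0) hc
      · exact h0
    have hcval : ((c.val : ℕ) : ZMod n) = c := by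
      rw [ZMod.natCast_val, ZMod.cast_id]
    rcases le_or_gt c.val (n - c.val) with hle | hgt
    · have hcd : cdist n c = c.val := by unfold cdist; omega
      have hv' : (c - 1).val = c.val - 1 := by
        have he : ((c.val - 1 : ℕ) : ZMod n) = c - 1 := by
          rw [Nat.cast_sub (by omega : 1 ≤ c.val), Nat.cast_one, hcval]
        rw [← he, ZMod.val_cast_of_lt (by omega)]
      have hcd' : cdist n (c - 1) = c.val - 1 := by unfold cdist; omega
      obtain ⟨w, hw⟩ := ih (c.val - 1) (by omega) (x + 1) (c - 1) hcd'
      refine ⟨(SimpleGraph.Walk.cons (cyc_adj_right hn x) w).copy rfl (by ring), ?_⟩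
      rw [SimpleGraph.Walk.length_copy]; change w.length + 1 = k; omega
    · have hcd : cdist n c = n - c.val := by unfold cdist; omega
      have hv' : (c + 1).val = (c.val + 1) % n := by
        haveI : Fact (1 < n) := ⟨hn⟩
        rw [ZMod.val_add, ZMod.val_one]
      have hcd' : cdist n (c + 1) = n - c.val - 1 := by
        rcases eq_or_lt_of_le (Nat.succ_le_of_lt hvlt) with he | he
        · have h0 : (c+1).val = 0 := by
            rw [hv', (by omega : c.val + 1 = n), Nat.mod_self]
          unfold cdist; omega
        · have h0 : (c+1).val = c.val + 1 := by rw [hv', Nat.mod_eq_of_lt he]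
          unfold cdist; omega
      obtain ⟨w, hw⟩ := ih (n - c.val - 1) (by omega) (x - 1) (c + 1) hcd'
      refine ⟨(SimpleGraph.Walk.cons (cyc_adj_left hn x) w).copy rfl (by ring), ?_⟩
      rw [SimpleGraph.Walk.length_copy]; change w.length + 1 = k; omega

lemma cyc_dist (hn : 2 ≤ n) (x y : ZMod n) :
    (cycGraph n).dist x y = cdist n (y - x) := by
  obtain ⟨w, hw⟩ := exists_cyc_walk hn x (y - x)
  have hle : (cycGraph n).dist x y ≤ cdist n (y - x) := by
    have h := SimpleGraph.dist_le (w.copy rfl (by ring : x + (y - x) = y))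
    simpa [hw] using h
  have hge : cdist n (y - x) ≤ (cycGraph n).dist x y := by
    have hr : (cycGraph n).Reachable x y := ⟨w.copy rfl (by ring)⟩
    obtain ⟨p, hp⟩ := hr.exists_walk_length_eq_dist
    rw [← hp]; exact cdist_le_walk p
  omega

end cyc

section prod
variable {m : ℕ} {F : Fin m → ℕ}

/-- sum-of-cdist lower bound along walks in the product graph -/
lemma pdist_le_walk (hF : ∀ i, 2 ≤ F i) {x y : ∀ i, ZMod (F i)}
    (w : (edgeCycleProd F).Walk x y) :
    ∑ i, cdist (F i) (y i - x i) ≤ w.length := by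
  haveI : ∀ i, NeZero (F i) := fun i => ⟨by have := hF i; omega⟩
  induction w with
  | nil => simp [cdist_zero]
  | @cons u v z h p ih =>
    rw [SimpleGraph.Walk.length_cons]
    obtain ⟨i0, hadj, heq⟩ := h
    have key : ∀ i, cdist (F i) (z i - u i) ≤
        cdist (F i) (z i - v i) + (if i = i0 then 1 else 0) := by
      intro i
      by_cases hi : i = i0
      · subst hi; simpa using cdist_step hadj
      · rw [heq i hi]; simp
    calc ∑ i, cdist (F i) (z i - u i)
        ≤ ∑ i, (cdist (F i) (z i - v i) + (if i = i0 then 1 else 0)) :=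
          Finset.sum_le_sum (fun i _ => key i)
      _ = (∑ i, cdist (F i) (z i - v i)) + 1 := by
          rw [Finset.sum_add_distrib, Finset.sum_ite_eq' Finset.univ i0]
          simp
      _ ≤ p.length + 1 := by omega

/-- graph hom embedding coordinate i -/
def coordHom (hF : ∀ i, 2 ≤ F i) (x : ∀ i, ZMod (F i)) (i : Fin m) :
    cycGraph (F i) →g edgeCycleProd F where
  toFun c := Function.update x i c
  map_rel' := by
    intro a b hab
    refine ⟨i, ?_, fun j hj => ?_⟩
    · rw [Function.update_self, Function.update_self]; exact hab
    · simp [Function.update_of_ne hj]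

lemma exists_prod_walk (hF : ∀ i, 2 ≤ F i) (x y : ∀ i, ZMod (F i)) :
    ∃ w : (edgeCycleProd F).Walk x y,
      w.length = ∑ i, cdist (F i) (y i - x i) := by
  haveI : ∀ i, NeZero (F i) := fun i => ⟨by have := hF i; omega⟩
  suffices H : ∀ s : Finset (Fin m), ∀ x : ∀ i, ZMod (F i), (∀ i ∉ s, x i = y i) →
      ∃ w : (edgeCycleProd F).Walk x y, w.length = ∑ i ∈ s, cdist (F i) (y i - x i) by
    exact H Finset.univ x (by simp)
  intro s
  induction s using Finset.induction_on with
  | empty =>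
    intro x hx
    have : x = y := funext fun i => hx i (by simp)
    subst this
    exact ⟨SimpleGraph.Walk.nil, by simp⟩
  | @insert i s hi ihs =>
    intro x hx
    set z := Function.update x i (y i) with hz
    obtain ⟨w1, hw1⟩ := exists_cyc_walk (hF i) (x i) (y i - x i)
    have hxx : Function.update x i (x i) = x := Function.update_eq_self i x
    have hxx' : (coordHom hF x i) (x i) = x := hxx
    have hzz' : (coordHom hF x i) (y i) = z := rfl
    obtain ⟨w2, hw2⟩ := ihs z (fun j hj => by
      by_cases hji : j = i
      · subst hji; simp [hz]
      · have : j ∉ insert i s := by simp [hji, hj]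
        rw [hz, Function.update_of_ne hji]
        exact hx j this)
    refine ⟨(((w1.copy rfl (by ring : x i + (y i - x i) = y i)).map
        (coordHom hF x i)).copy hxx' hzz').append w2, ?_⟩
    rw [SimpleGraph.Walk.length_append, SimpleGraph.Walk.length_copy,
      SimpleGraph.Walk.length_map, SimpleGraph.Walk.length_copy, hw1, hw2,
      Finset.sum_insert hi]
    congr 1
    apply Finset.sum_congr rfl
    intro j hj
    have hji : j ≠ i := fun h => hi (h ▸ hj)
    rw [hz, Function.update_of_ne hji]
lemma prod_dist (hF : ∀ i, 2 ≤ F i) (x y : ∀ i, ZMod (F i)) :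
    (edgeCycleProd F).dist x y = ∑ i, cdist (F i) (y i - x i) := by
  obtain ⟨w, hw⟩ := exists_prod_walk hF x y
  have hle : (edgeCycleProd F).dist x y ≤ ∑ i, cdist (F i) (y i - x i) := by
    have := SimpleGraph.dist_le w
    omega
  have hge : ∑ i, cdist (F i) (y i - x i) ≤ (edgeCycleProd F).dist x y := by
    have hr : (edgeCycleProd F).Reachable x y := ⟨w⟩
    obtain ⟨p, hp⟩ := hr.exists_walk_length_eq_dist
    rw [← hp]
    exact pdist_le_walk hF p
  omega

end prod

section prodconv
variable {m : ℕ} {F : Fin m → ℕ}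

lemma sum_update_left (hF : ∀ i, 2 ≤ F i) (u : ∀ i, ZMod (F i)) (i : Fin m)
    (c : ZMod (F i)) :
    ∑ j, cdist (F j) (Function.update u i c j - u j) = cdist (F i) (c - u i) := by
  haveI : ∀ i, NeZero (F i) := fun i => ⟨by have := hF i; omega⟩
  rw [Fintype.sum_eq_single i]
  · rw [Function.update_self]
  · intro j hj
    rw [Function.update_of_ne hj]
    simp [cdist_zero]

lemma sum_update_right (hF : ∀ i, 2 ≤ F i) (u : ∀ i, ZMod (F i)) (i : Fin m)
    (c : ZMod (F i)) :
    ∑ j, cdist (F j) (u j - Function.update u i c j) = cdist (F i) (u i - c) := by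
  haveI : ∀ i, NeZero (F i) := fun i => ⟨by have := hF i; omega⟩
  rw [Fintype.sum_eq_single i]
  · rw [Function.update_self]
  · intro j hj
    rw [Function.update_of_ne hj]
    simp [cdist_zero]

/-- replacing one coordinate of a member by the coordinate of another member stays inside
a convex set. -/
lemma update_mem (hF : ∀ i, 2 ≤ F i) {W : Set (∀ i, ZMod (F i))}
    (hW : GConvex (edgeCycleProd F) W) {u w : ∀ i, ZMod (F i)}
    (hu : u ∈ W) (hw : w ∈ W) (i : Fin m) : Function.update w i (u i) ∈ W := by
  haveI : ∀ i, NeZero (F i) := fun i => ⟨by have := hF i; omega⟩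
  apply hW w hw u hu
  rw [prod_dist hF, prod_dist hF, prod_dist hF, ← Finset.sum_add_distrib]
  apply Finset.sum_congr rfl
  intro j _
  by_cases hj : j = i
  · subst hj
    rw [Function.update_self]
    simp [cdist_zero]
  · rw [Function.update_of_ne hj]
    simp [cdist_zero]

/-- projections of convex sets are convex -/
lemma proj_convex (hF : ∀ i, 2 ≤ F i) {W : Set (∀ i, ZMod (F i))}
    (hW : GConvex (edgeCycleProd F) W) (i : Fin m) :
    GConvex (cycGraph (F i)) ((fun x => x i) '' W) := by
  haveI : ∀ i, NeZero (F i) := fun i => ⟨by have := hF i; omega⟩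
  rintro a ⟨u, hu, rfl⟩ b ⟨v, hv, rfl⟩ c hc
  set v' := Function.update u i (v i) with hv'
  have hv'W : v' ∈ W := update_mem hF hW hv hu i
  set w := Function.update u i c with hwdef
  have hwW : w ∈ W := by
    apply hW u hu v' hv'W
    rw [prod_dist hF, prod_dist hF, prod_dist hF, sum_update_left hF]
    have h1 : ∑ j, cdist (F j) (v' j - w j) = cdist (F i) (v i - c) := by
      rw [Fintype.sum_eq_single i]
      · rw [hv', hwdef, Function.update_self, Function.update_self]
      · intro j hj
        rw [hv', hwdef, Function.update_of_ne hj, Function.update_of_ne hj]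
        simp [cdist_zero]
    rw [h1, sum_update_left hF]
    rw [cyc_dist (hF i), cyc_dist (hF i), cyc_dist (hF i)] at hc
    exact hc
  exact ⟨w, hwW, Function.update_self i c u⟩

/-- a nonempty convex set is the product of its projections -/
lemma mem_of_proj (hF : ∀ i, 2 ≤ F i) {W : Set (∀ i, ZMod (F i))}
    (hW : GConvex (edgeCycleProd F) W) (hne : W.Nonempty)
    (x : ∀ i, ZMod (F i)) (hx : ∀ i, x i ∈ (fun z => z i) '' W) : x ∈ W := by
  haveI : ∀ i, NeZero (F i) := fun i => ⟨by have := hF i; omega⟩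
  suffices H : ∀ s : Finset (Fin m), ∃ w ∈ W, ∀ i ∈ s, w i = x i by
    obtain ⟨w, hw, hwx⟩ := H Finset.univ
    have : w = x := funext fun i => hwx i (by simp)
    rwa [← this]
  intro s
  induction s using Finset.induction_on with
  | empty => exact ⟨hne.choose, hne.choose_spec, by simp⟩
  | @insert i s hi ihs =>
    obtain ⟨w, hwW, hwx⟩ := ihs
    obtain ⟨u, huW, hui⟩ := hx i
    refine ⟨Function.update w i (u i), update_mem hF hW huW hwW i, ?_⟩
    intro j hj
    rcases Finset.mem_insert.mp hj with rfl | hjs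
    · rw [Function.update_self]; exact hui
    · have hji : j ≠ i := fun h => hi (h ▸ hjs)
      rw [Function.update_of_ne hji]
      exact hwx j hjs

end prodconv

/-- The arc starting at `a` of length `l`. -/
def arcSet (n : ℕ) (a : ZMod n) (l : ℕ) : Set (ZMod n) :=
  {x | ∃ r ≤ l, x = a + (r : ZMod n)}

section cyc2
variable {n : ℕ} [NeZero n]

lemma natCast_val_eq (c : ZMod n) : ((c.val : ℕ) : ZMod n) = c := by
  rw [ZMod.natCast_val, ZMod.cast_id]

lemma cdist_cast {d : ℕ} (h1 : d < n) (h2 : 2 * d ≤ n) :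
    cdist n ((d : ℕ) : ZMod n) = d := by
  unfold cdist
  rw [ZMod.val_cast_of_lt h1]
  omega

lemma cdist_eq_zero_iff {c : ZMod n} : cdist n c = 0 ↔ c = 0 := by
  unfold cdist
  constructor
  · intro h
    have h1 := ZMod.val_lt c
    have h2 : c.val = 0 := by omega
    exact (ZMod.val_eq_zero c).mp h2
  · rintro rfl; simp [ZMod.val_zero]

lemma val_or (c : ZMod n) : c.val = cdist n c ∨ c.val = n - cdist n c := by
  unfold cdist
  have := ZMod.val_lt c
  omega

lemma cdist_le_half {k : ℕ} (hn : n = k + k) (c : ZMod n) : cdist n c ≤ k := by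
  unfold cdist
  have := ZMod.val_lt c
  omega

/-- intersection of convex sets is convex -/
lemma GConvex.inter {α : Type*} {G : SimpleGraph α} {W1 W2 : Set α}
    (h1 : GConvex G W1) (h2 : GConvex G W2) : GConvex G (W1 ∩ W2) :=
  fun u hu v hv w hw => ⟨h1 u hu.1 v hv.1 w hw, h2 u hu.2 v hv.2 w hw⟩

/-- Classification: a proper nonempty convex subset of an even cycle is contained in an
arc of length at most `k - 1`. -/
lemma convex_subset_arc {k : ℕ} (hk : 1 ≤ k) (hn : n = k + k) {W : Set (ZMod n)}
    (hW : GConvex (cycGraph n) W) (hne : W.Nonempty) (hproper : W ≠ Set.univ) :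
    ∃ a l, l + 1 ≤ k ∧ W ⊆ arcSet n a l := by
  have hn2 : 2 ≤ n := by omega
  obtain ⟨z, hz⟩ := (Set.ne_univ_iff_exists_notMem W).mp hproper
  set P : Set ℕ := (fun w => (w - z).val) '' W with hP
  have hPne : P.Nonempty := hne.image _
  have hPbound : ∀ p ∈ P, 1 ≤ p ∧ p ≤ n - 1 := by
    rintro p ⟨w, hw, rfl⟩
    have h1 := ZMod.val_lt (w - z)
    have h2 : w - z ≠ 0 := fun h => hz (sub_eq_zero.mp h ▸ hw)
    have h3 : (w - z).val ≠ 0 := fun h => h2 ((ZMod.val_eq_zero _).mp h)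
    show 1 ≤ (w - z).val ∧ (w - z).val ≤ n - 1
    omega
  have hPbdd : BddAbove P := ⟨n - 1, fun p hp => (hPbound p hp).2⟩
  set s := sInf P with hs
  set t := sSup P with ht
  have hsP : s ∈ P := Nat.sInf_mem hPne
  have htP : t ∈ P := Nat.sSup_mem hPne hPbdd
  obtain ⟨u, huW, hu'⟩ := hsP
  obtain ⟨v, hvW, hv'⟩ := htP
  have hu : (u - z).val = s := hu'
  have hv : (v - z).val = t := hv'
  have hrange : ∀ w ∈ W, s ≤ (w - z).val ∧ (w - z).val ≤ t := by
    intro w hw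
    exact ⟨Nat.sInf_le ⟨w, hw, rfl⟩, le_csSup hPbdd ⟨w, hw, rfl⟩⟩
  have hs1 : 1 ≤ s := (hPbound s ⟨u, huW, hu⟩).1
  have htn : t ≤ n - 1 := (hPbound t ⟨v, hvW, hv⟩).2
  have hst : s ≤ t := by
    have := hrange v hvW; omega
  -- u = z + s, v = z + t
  have huz : u = z + (s : ZMod n) := by
    have : ((u - z).val : ZMod n) = u - z := natCast_val_eq _
    rw [hu] at this; rw [this]; ring
  have hvz : v = z + (t : ZMod n) := by
    have : ((v - z).val : ZMod n) = v - z := natCast_val_eq _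
    rw [hv] at this; rw [this]; ring
  -- key bound : t - s ≤ k - 1
  have hkey : t - s + 1 ≤ k := by
    by_contra hcon
    have h1 : k ≤ t - s := by omega
    -- show z ∈ W, contradiction
    apply hz
    apply hW u huW v hvW z
    rw [cyc_dist hn2, cyc_dist hn2, cyc_dist hn2]
    have hzu : z - u = -(s : ZMod n) := by rw [huz]; ring
    have hvzz : v - z = (t : ZMod n) := by rw [hvz]; ring
    have hvu : v - u = ((t - s : ℕ) : ZMod n) := by
      rw [huz, hvz, Nat.cast_sub hst]; ring
    rw [hzu, cdist_neg, hvzz, hvu]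
    have hsk : s ≤ k - 1 := by omega
    have c1 : cdist n ((s : ℕ) : ZMod n) = s := cdist_cast (by omega) (by omega)
    have c2 : cdist n ((t : ℕ) : ZMod n) = n - t := by
      unfold cdist
      rw [ZMod.val_cast_of_lt (by omega)]
      omega
    have c3 : cdist n ((t - s : ℕ) : ZMod n) = n - (t - s) := by
      unfold cdist
      rw [ZMod.val_cast_of_lt (by omega)]
      omega
    rw [c1, c2, c3]
    omega
  refine ⟨z + (s : ZMod n), t - s, hkey, ?_⟩
  intro w hw
  obtain ⟨h1, h2⟩ := hrange w hw
  refine ⟨(w - z).val - s, by omega, ?_⟩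
  have hwz : ((w - z).val : ZMod n) = w - z := natCast_val_eq _
  have : (((w - z).val - s : ℕ) : ZMod n) = (w - z) - (s : ZMod n) := by
    rw [Nat.cast_sub h1, hwz]
  rw [this]; ring

/-- Helly property with number 3 for convex sets in an even cycle. -/
lemma cyc_helly {k : ℕ} (hk : 1 ≤ k) (hn : n = k + k) (ι : Type) [Finite ι]
    (C : ι → Set (ZMod n)) (hconv : ∀ j, GConvex (cycGraph n) (C j))
    (h3 : ∀ j j' j'', (C j ∩ C j' ∩ C j'').Nonempty) : (⋂ j, C j).Nonempty := by
  have hn2 : 2 ≤ n := by omega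
  cases isEmpty_or_nonempty ι with
  | inl h => simp only [Set.iInter_of_empty]; exact ⟨0, trivial⟩
  | inr h =>
  by_cases hall : ∀ j, C j = Set.univ
  · refine ⟨0, Set.mem_iInter.mpr fun j => by rw [hall j]; trivial⟩
  push_neg at hall
  obtain ⟨j0, hj0⟩ := hall
  have hj0ne : (C j0).Nonempty := by
    obtain ⟨x, hx⟩ := h3 j0 j0 j0
    exact ⟨x, hx.2⟩
  obtain ⟨a, l, hl, hsub⟩ := convex_subset_arc hk hn (hconv j0) hj0ne hj0
  set A : ι → Set (ZMod n) := fun j => C j ∩ C j0 with hA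
  have hAconv : ∀ j, GConvex (cycGraph n) (A j) := fun j => (hconv j).inter (hconv j0)
  have hAsub : ∀ j, A j ⊆ arcSet n a l := fun j => fun x hx => hsub hx.2
  -- index sets
  set S : ι → Set ℕ := fun j => {r | r ≤ l ∧ a + (r : ZMod n) ∈ A j} with hS
  have harc_mem : ∀ j, ∀ x ∈ A j, ∃ r, r ∈ S j ∧ x = a + (r : ZMod n) := by
    intro j x hx
    obtain ⟨r, hr, hxr⟩ := hAsub j hx
    exact ⟨r, ⟨hr, hxr ▸ hx⟩, hxr⟩
  have hSne : ∀ j, (S j).Nonempty := by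
    intro j
    obtain ⟨x, hx1, hx2⟩ := h3 j j j0
    obtain ⟨r, hr, _⟩ := harc_mem j x ⟨hx1.1, hx2⟩
    exact ⟨r, hr⟩
  -- betweenness
  have hbetween : ∀ j, ∀ r ∈ S j, ∀ p ∈ S j, ∀ q, r ≤ q → q ≤ p → q ∈ S j := by
    intro j r hr p hp q hrq hqp
    have hql : q ≤ l := le_trans hqp hp.1
    refine ⟨hql, ?_⟩
    apply hAconv j _ hr.2 _ hp.2
    rw [cyc_dist hn2, cyc_dist hn2, cyc_dist hn2]
    have e1 : a + (q : ZMod n) - (a + (r : ZMod n)) = ((q - r : ℕ) : ZMod n) := by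
      rw [Nat.cast_sub hrq]; ring
    have e2 : a + (p : ZMod n) - (a + (q : ZMod n)) = ((p - q : ℕ) : ZMod n) := by
      rw [Nat.cast_sub hqp]; ring
    have e3 : a + (p : ZMod n) - (a + (r : ZMod n)) = ((p - r : ℕ) : ZMod n) := by
      rw [Nat.cast_sub (le_trans hrq hqp)]; ring
    rw [e1, e2, e3]
    have hpl : p ≤ l := hp.1
    rw [cdist_cast (by omega) (by omega), cdist_cast (by omega) (by omega),
        cdist_cast (by omega) (by omega)]
    omega
  set sm : ι → ℕ := fun j => sInf (S j) with hsm
  have hsmem : ∀ j, sm j ∈ S j := fun j => Nat.sInf_mem (hSne j)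
  obtain ⟨jm, hjm⟩ := Finite.exists_max sm
  refine ⟨a + ((sm jm : ℕ) : ZMod n), Set.mem_iInter.mpr fun j => ?_⟩
  -- find r ∈ S j ∩ S jm
  obtain ⟨x, hx⟩ := h3 j jm j0
  have hxAj : x ∈ A j := ⟨hx.1.1, hx.2⟩
  have hxAjm : x ∈ A jm := ⟨hx.1.2, hx.2⟩
  obtain ⟨r, hrSj, hxr⟩ := harc_mem j x hxAj
  have hrSjm : r ∈ S jm := ⟨hrSj.1, hxr ▸ hxAjm⟩
  have h1 : sm jm ≤ r := Nat.sInf_le hrSjm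
  have h2 : sm j ≤ sm jm := hjm j
  have : sm jm ∈ S j := hbetween j (sm j) (hsmem j) r hrSj (sm jm) h2 h1
  exact this.2.1

end cyc2

section cyc3
variable {n : ℕ} [NeZero n]

lemma arc_convex {k : ℕ} (hk : 1 ≤ k) (hn : n = k + k) (a : ZMod n) (l : ℕ)
    (hl : l + 1 ≤ k) : GConvex (cycGraph n) (arcSet n a l) := by
  have hn2 : 2 ≤ n := by omega
  suffices key : ∀ r ≤ l, ∀ p ≤ l, r ≤ p → ∀ w,
      cdist n (w - (a + (r : ZMod n))) + cdist n ((a + (p : ZMod n)) - w)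
        = cdist n ((a + (p : ZMod n)) - (a + (r : ZMod n))) → w ∈ arcSet n a l by
    rintro u ⟨r, hr, rfl⟩ v ⟨p, hp, rfl⟩ w hw
    rw [cyc_dist hn2, cyc_dist hn2, cyc_dist hn2] at hw
    rcases le_total r p with hrp | hpr
    · exact key r hr p hp hrp w hw
    · apply key p hp r hr hpr w
      rw [show w - (a + (p : ZMod n)) = -((a + (p : ZMod n)) - w) by ring, cdist_neg,
        show (a + (r : ZMod n)) - w = -(w - (a + (r : ZMod n))) by ring, cdist_neg,
        show (a + (r : ZMod n)) - (a + (p : ZMod n))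
          = -((a + (p : ZMod n)) - (a + (r : ZMod n))) by ring, cdist_neg]
      omega
  intro r hr p hp hrp w hw
  set d := p - r with hd
  have hvu : (a + (p : ZMod n)) - (a + (r : ZMod n)) = ((d : ℕ) : ZMod n) := by
    rw [hd, Nat.cast_sub hrp]; ring
  have hdl : d ≤ l := by omega
  have hcd : cdist n ((d : ℕ) : ZMod n) = d := cdist_cast (by omega) (by omega)
  rw [hvu, hcd] at hw
  set c := w - (a + (r : ZMod n)) with hc
  set e1 := cdist n c with he1
  rcases Nat.eq_zero_or_pos e1 with he0 | hepos
  · have : c = 0 := cdist_eq_zero_iff.mp he0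
    have : w = a + (r : ZMod n) := by
      have := sub_eq_zero.mp this; exact this
    exact ⟨r, hr, this⟩
  · rcases val_or c with hval | hval
    · -- w = a + (r + e1)
      have hwc : w = a + (((r + e1 : ℕ) : ℕ) : ZMod n) := by
        have h1 : c = ((e1 : ℕ) : ZMod n) := by rw [← natCast_val_eq c, hval]
        have h2 : w = (a + (r : ZMod n)) + c := by rw [hc]; ring
        rw [h2, h1]; push_cast; ring
      have he1d : e1 ≤ d := by omega
      exact ⟨r + e1, by omega, hwc⟩
    · -- contradiction
      exfalso
      have he1d : e1 ≤ d := by omega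
      have hcc : c = -((e1 : ℕ) : ZMod n) := by
        rw [← natCast_val_eq c, hval, Nat.cast_sub (by omega : e1 ≤ n)]
        simp [ZMod.natCast_self]
      have hvw : (a + (p : ZMod n)) - w = (((d + e1 : ℕ) : ℕ) : ZMod n) := by
        have : (a + (p : ZMod n)) - w = ((d : ℕ) : ZMod n) - c := by
          rw [hc, ← hvu]; ring
        rw [this, hcc]; push_cast; ring
      have : cdist n ((a + (p : ZMod n)) - w) = min (d + e1) (n - (d + e1)) := by
        rw [hvw]
        unfold cdist
        rw [ZMod.val_cast_of_lt (by omega)]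
      rw [this] at hw
      omega

end cyc3

section part3
variable {n : ℕ} [NeZero n]

lemma counterexample {k : ℕ} (hk3 : 3 ≤ k) (hn : n = k + k) :
    ∃ W : Fin 3 → Set (ZMod n), (∀ j, GConvex (cycGraph n) (W j)) ∧
      (∀ j j', (W j ∩ W j').Nonempty) ∧ (⋂ j, W j) = ∅ := by
  have hk : 1 ≤ k := by omega
  have hn2 : 2 ≤ n := by omega
  refine ⟨![arcSet n 0 (k-1), arcSet n ((k-1 : ℕ) : ZMod n) (k-1),
            arcSet n ((2*k-2 : ℕ) : ZMod n) 2], ?_, ?_, ?_⟩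
  · intro j
    fin_cases j <;> simp only [Matrix.cons_val_zero, Matrix.cons_val_one,
      Matrix.head_cons, Matrix.cons_val_two, Matrix.tail_cons] <;>
      exact arc_convex hk hn _ _ (by omega)
  · -- pairwise intersections
    have m00 : (0 : ZMod n) ∈ arcSet n 0 (k-1) := ⟨0, by omega, by simp⟩
    have m01 : ((k-1:ℕ) : ZMod n) ∈ arcSet n 0 (k-1) := ⟨k-1, by omega, by simp⟩
    have m10 : ((k-1:ℕ) : ZMod n) ∈ arcSet n ((k-1:ℕ):ZMod n) (k-1) :=
      ⟨0, by omega, by simp⟩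
    have m12 : ((2*k-2:ℕ) : ZMod n) ∈ arcSet n ((k-1:ℕ):ZMod n) (k-1) :=
      ⟨k-1, by omega, by rw [← Nat.cast_add]; congr 1; omega⟩
    have m21 : ((2*k-2:ℕ) : ZMod n) ∈ arcSet n ((2*k-2:ℕ):ZMod n) 2 :=
      ⟨0, by omega, by simp⟩
    have m20 : (0 : ZMod n) ∈ arcSet n ((2*k-2:ℕ):ZMod n) 2 := by
      refine ⟨2, by omega, ?_⟩
      rw [← Nat.cast_add, (by omega : 2*k-2+2 = n), ZMod.natCast_self]
    intro j j'
    fin_cases j <;> fin_cases j' <;>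
      simp only [Matrix.cons_val_zero, Matrix.cons_val_one, Matrix.head_cons,
        Matrix.cons_val_two, Matrix.tail_cons]
    · exact ⟨0, m00, m00⟩
    · exact ⟨((k-1:ℕ) : ZMod n), m01, m10⟩
    · exact ⟨0, m00, m20⟩
    · exact ⟨((k-1:ℕ) : ZMod n), m10, m01⟩
    · exact ⟨((k-1:ℕ) : ZMod n), m10, m10⟩
    · exact ⟨((2*k-2:ℕ) : ZMod n), m12, m21⟩
    · exact ⟨0, m20, m00⟩
    · exact ⟨((2*k-2:ℕ) : ZMod n), m21, m12⟩
    · exact ⟨((2*k-2:ℕ) : ZMod n), m21, m21⟩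
  · apply Set.eq_empty_iff_forall_notMem.mpr
    intro x hx
    have h0 := Set.mem_iInter.mp hx 0
    have h1 := Set.mem_iInter.mp hx 1
    have h2 := Set.mem_iInter.mp hx 2
    simp only [Matrix.cons_val_zero, Matrix.cons_val_one, Matrix.head_cons,
      Matrix.cons_val_two, Matrix.tail_cons] at h0 h1 h2
    obtain ⟨r0, hr0, he0⟩ := h0
    obtain ⟨r1, hr1, he1⟩ := h1
    obtain ⟨r2, hr2, he2⟩ := h2
    rw [zero_add] at he0
    have e1 : (r0 : ZMod n) = ((k-1+r1 : ℕ) : ZMod n) := by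
      rw [← he0, Nat.cast_add]; exact he1
    have e2 : (r0 : ZMod n) = ((2*k-2+r2 : ℕ) : ZMod n) := by
      rw [← he0, Nat.cast_add]; exact he2
    rw [ZMod.natCast_eq_natCast_iff'] at e1 e2
    rw [Nat.mod_eq_of_lt (by omega), Nat.mod_eq_of_lt (by omega)] at e1
    rcases eq_or_lt_of_le (by omega : 2*k-2+r2 ≤ n) with hb | hb
    · rw [Nat.mod_eq_of_lt (by omega), hb, Nat.mod_self] at e2
      omega
    · rw [Nat.mod_eq_of_lt (by omega), Nat.mod_eq_of_lt hb] at e2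
      omega

end part3

lemma k2_helly (ι : Type) [Finite ι] (W : ι → Set (ZMod 2))
    (h2 : ∀ j j', (W j ∩ W j').Nonempty) : (⋂ j, W j).Nonempty := by
  by_cases h1 : ∀ j, (1 : ZMod 2) ∈ W j
  · exact ⟨1, Set.mem_iInter.mpr h1⟩
  · push_neg at h1
    obtain ⟨j1, hj1⟩ := h1
    refine ⟨0, Set.mem_iInter.mpr fun j => ?_⟩
    obtain ⟨x, hxj, hxj1⟩ := h2 j j1
    have hcases : ∀ y : ZMod 2, y = 0 ∨ y = 1 := by decide
    rcases hcases x with rfl | rfl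
    · exact hxj
    · exact absurd hxj1 hj1

/-- The Helly number of a Cartesian product of edges and even cycles is at most 3:
every finite family of convex sets meeting 3 by 3 has a common vertex.
In particular `h(K₂) = 2` (pairwise intersecting convex sets in `K₂` meet) and
`h(C) = 3` for an even cycle `C` of length at least 6 (pairwise intersection
does not suffice). -/
theorem stmt18 :
    (∀ (m : ℕ) (F : Fin m → ℕ), (∀ i, Even (F i) ∧ 2 ≤ F i) →
      ∀ (ι : Type) [Finite ι] (W : ι → Set (∀ i, ZMod (F i))),
        (∀ j, GConvex (edgeCycleProd F) (W j)) →
        (∀ j k l, (W j ∩ W k ∩ W l).Nonempty) →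
        (⋂ j, W j).Nonempty) ∧
    (∀ (ι : Type) [Finite ι] (W : ι → Set (ZMod 2)),
        (∀ j, GConvex (cycGraph 2) (W j)) →
        (∀ j k, (W j ∩ W k).Nonempty) →
        (⋂ j, W j).Nonempty) ∧
    (∀ n : ℕ, Even n → 6 ≤ n →
      ∃ W : Fin 3 → Set (ZMod n), (∀ j, GConvex (cycGraph n) (W j)) ∧
        (∀ j k, (W j ∩ W k).Nonempty) ∧ (⋂ j, W j) = ∅) := by
  refine ⟨?_, ?_, ?_⟩
  · -- part 1: products of even cycles, Helly number ≤ 3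
    intro m F hFs ι _ W hconv h3
    have hF : ∀ i, 2 ≤ F i := fun i => (hFs i).2
    haveI : ∀ i, NeZero (F i) := fun i => ⟨by have := hF i; omega⟩
    have hWne : ∀ j, (W j).Nonempty := by
      intro j
      obtain ⟨x, hx⟩ := h3 j j j
      exact ⟨x, hx.2⟩
    have hcoord : ∀ i, (⋂ j, (fun x => x i) '' W j).Nonempty := by
      intro i
      obtain ⟨k, hkk⟩ := (hFs i).1
      have hk : 1 ≤ k := by have := hF i; omega
      apply cyc_helly hk hkk ι (fun j => (fun x => x i) '' W j)
        (fun j => proj_convex hF (hconv j) i)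
      intro j j' j''
      obtain ⟨x, hx⟩ := h3 j j' j''
      exact ⟨x i, ⟨⟨x, hx.1.1, rfl⟩, ⟨x, hx.1.2, rfl⟩⟩, ⟨x, hx.2, rfl⟩⟩
    choose c hc using hcoord
    refine ⟨c, Set.mem_iInter.mpr fun j => ?_⟩
    exact mem_of_proj hF (hconv j) (hWne j) c (fun i => Set.mem_iInter.mp (hc i) j)
  · -- part 2 : K₂
    intro ι _ W _ h2
    exact k2_helly ι W h2
  · -- part 3 : counterexample in even cycles of length ≥ 6
    intro n hev h6
    obtain ⟨k, hkk⟩ := hev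
    haveI : NeZero n := ⟨by omega⟩
    exact counterexample (by omega) hkk
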